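/- Let a, b, t be integers with 1 ≤ a ≤ b < t, and let n be a positive integer divisible by 2t - 2. Then ex(n, K_{a,b}, K_{1,t}) = N(K_{a,b}, (n/(2t-2))·K_{t-1,t-1}), where (n/(2t-2))·K_{t-1,t-1} is the vertex-disjoint union of n/(2t-2) copies of K_{t-1,t-1}. -/

import Mathlib

open SimpleGraph

/-- `F` is contained in `G` as a subgraph, i.e. there is an injective graph
homomorphism from `F` to `G`. -/
def ContainsCopy {α β : Type*} (F : SimpleGraph α) (G : SimpleGraph β) : Prop :=
  ∃ f : F →g G, Function.Injective f

/-- `N(H,G)`: the number of subgraphs of `G` isomorphic to `H`. -/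
noncomputable def copyCount' {α β : Type*} (H : SimpleGraph α) (G : SimpleGraph β) : ℕ :=
  Nat.card {G' : G.Subgraph // Nonempty (H ≃g G'.coe)}

/-- `ex(n,H,F)`: the maximum number of copies of `H` in an `F`-free graph on `n` vertices. -/
noncomputable def exGen (n : ℕ) {α β : Type*} (H : SimpleGraph α) (F : SimpleGraph β) : ℕ :=
  sSup {m | ∃ G : SimpleGraph (Fin n), ¬ ContainsCopy F G ∧ m = copyCount' H G}

/-- The complete bipartite graph `K_{a,b}`. -/
abbrev Kbip (a b : ℕ) : SimpleGraph (Fin a ⊕ Fin b) := completeBipartiteGraph (Fin a) (Fin b)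

/-- `K̄_{a,b}`: obtained from `K_{a,b}` by adding all edges inside the part of size `a`. -/
def KbipBar (a b : ℕ) : SimpleGraph (Fin a ⊕ Fin b) :=
  SimpleGraph.fromRel (fun u _ => u.isLeft)

/-- `k` vertex-disjoint copies of `G`. -/
def disjCopies (k : ℕ) {α : Type*} (G : SimpleGraph α) : SimpleGraph (Fin k × α) :=
  SimpleGraph.fromRel (fun u v => u.1 = v.1 ∧ G.Adj u.2 v.2)

/-- The vertex-disjoint union of `G` and `H`. -/
def disjSum {α β : Type*} (G : SimpleGraph α) (H : SimpleGraph β) : SimpleGraph (α ⊕ β) :=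
  SimpleGraph.fromRel (fun u v =>
    (∃ x y, u = Sum.inl x ∧ v = Sum.inl y ∧ G.Adj x y) ∨
    (∃ x y, u = Sum.inr x ∧ v = Sum.inr y ∧ H.Adj x y))

/-- Placing a graph `G0` on the `Fin b`-part of the vertex set `Fin a ⊕ Fin b`. -/
def liftRight (a : ℕ) {b : ℕ} (G0 : SimpleGraph (Fin b)) : SimpleGraph (Fin a ⊕ Fin b) :=
  SimpleGraph.fromRel (fun u v => ∃ x y, u = Sum.inr x ∧ v = Sum.inr y ∧ G0.Adj x y)


open Finset

section AuxProofs

variable {V : Type*}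

/-- ordered copies of `K_{a,b}` -/
noncomputable def OC [Fintype V] (G : SimpleGraph V) (a b : ℕ) : Finset (Finset V × Finset V) :=
  Set.Finite.toFinset (Set.toFinite {p : Finset V × Finset V |
    p.1.card = a ∧ p.2.card = b ∧ Disjoint p.1 p.2 ∧ ∀ x ∈ p.1, ∀ y ∈ p.2, G.Adj x y})

lemma mem_OC [Fintype V] {G : SimpleGraph V} {a b : ℕ} {p : Finset V × Finset V} :
    p ∈ OC G a b ↔ p.1.card = a ∧ p.2.card = b ∧ Disjoint p.1 p.2 ∧
      ∀ x ∈ p.1, ∀ y ∈ p.2, G.Adj x y := by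
  simp [OC]

def bipSub (G : SimpleGraph V) (A B : Finset V) : G.Subgraph where
  verts := ↑A ∪ ↑B
  Adj x y := ((x ∈ A ∧ y ∈ B) ∨ (y ∈ A ∧ x ∈ B)) ∧ G.Adj x y
  adj_sub h := h.2
  edge_vert {x y} h := by rcases h.1 with ⟨h1, h2⟩ | ⟨h1, h2⟩ <;> simp [h1, h2]
  symm := ⟨fun x y h => ⟨h.1.symm, h.2.symm⟩⟩

lemma bipSub_verts (G : SimpleGraph V) (A B : Finset V) :
    (bipSub G A B).verts = ↑A ∪ ↑B := rfl

lemma bipSub_adj (G : SimpleGraph V) (A B : Finset V) (x y : V) :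
    (bipSub G A B).Adj x y ↔ ((x ∈ A ∧ y ∈ B) ∨ (y ∈ A ∧ x ∈ B)) ∧ G.Adj x y := Iff.rfl

lemma bipSub_comm (G : SimpleGraph V) (A B : Finset V) :
    bipSub G A B = bipSub G B A := by
  ext x y
  · simp [bipSub_verts, Set.union_comm]
  · rw [bipSub_adj, bipSub_adj]; tauto

noncomputable def bipSubIso {G : SimpleGraph V} {A B : Finset V} {a b : ℕ}
    (hA : A.card = a) (hB : B.card = b) (hd : Disjoint A B)
    (hadj : ∀ x ∈ A, ∀ y ∈ B, G.Adj x y) :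
    Kbip a b ≃g (bipSub G A B).coe := by
  classical
  have hd' : Disjoint (↑A : Set V) ↑B := by simpa using hd
  let eA : Fin a ≃ ↥(↑A : Set V) := (Finset.equivFinOfCardEq hA).symm
  let eB : Fin b ≃ ↥(↑B : Set V) := (Finset.equivFinOfCardEq hB).symm
  let φ : Fin a ⊕ Fin b ≃ ↥(bipSub G A B).verts :=
    (Equiv.sumCongr eA eB).trans (Equiv.Set.union hd').symm
  have hl : ∀ i : Fin a, (↑(φ (Sum.inl i)) : V) ∈ A := fun i => by
    simp [φ, Equiv.Set.union_symm_apply_left]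
    exact (eA i).2
  have hr : ∀ j : Fin b, (↑(φ (Sum.inr j)) : V) ∈ B := fun j => by
    simp [φ, Equiv.Set.union_symm_apply_right]
    exact (eB j).2
  have hAnB : ∀ x, x ∈ A → x ∉ B := fun x hx => Finset.disjoint_left.mp hd hx
  refine ⟨φ, ?_⟩
  rintro (i | j) (i' | j') <;>
    simp only [Subgraph.coe_adj, completeBipartiteGraph_adj, Sum.isLeft_inl, Sum.isRight_inl,
      Sum.isLeft_inr, Sum.isRight_inr, bipSub] <;> constructor
  · rintro ⟨⟨h1, h2⟩ | ⟨h1, h2⟩, -⟩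
    · exact absurd h2 (hAnB _ (hl i'))
    · exact absurd h2 (hAnB _ (hl i))
  · simp
  · intro _; simp
  · intro _
    exact ⟨Or.inl ⟨hl i, hr j'⟩, hadj _ (hl i) _ (hr j')⟩
  · intro _; simp
  · intro _
    exact ⟨Or.inr ⟨hl i', hr j⟩, (hadj _ (hl i') _ (hr j)).symm⟩
  · rintro ⟨⟨h1, h2⟩ | ⟨h1, h2⟩, -⟩
    · exact absurd (hr j) (hAnB _ h1)
    · exact absurd (hr j') (hAnB _ h1)
  · simp

lemma exists_OC_of_iso [Fintype V] {G : SimpleGraph V} {a b : ℕ} {G' : G.Subgraph}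
    (e : Kbip a b ≃g G'.coe) :
    ∃ p ∈ OC G a b, G' = bipSub G p.1 p.2 := by
  classical
  set A : Finset V := Finset.univ.image (fun i : Fin a => (↑(e (Sum.inl i)) : V)) with hA
  set B : Finset V := Finset.univ.image (fun j : Fin b => (↑(e (Sum.inr j)) : V)) with hB
  have einj : Function.Injective (fun x : Fin a ⊕ Fin b => (↑(e x) : V)) :=
    Subtype.val_injective.comp e.injective
  have hmemA : ∀ {x : V}, x ∈ A ↔ ∃ i : Fin a, (↑(e (Sum.inl i)) : V) = x := by
    intro x; simp [hA]
  have hmemB : ∀ {x : V}, x ∈ B ↔ ∃ j : Fin b, (↑(e (Sum.inr j)) : V) = x := by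
    intro x; simp [hB]
  have hcardA : A.card = a := by
    rw [hA, Finset.card_image_of_injective _ (fun i i' h => by
      simpa using einj (a₁ := Sum.inl i) (a₂ := Sum.inl i') h)]
    simp
  have hcardB : B.card = b := by
    rw [hB, Finset.card_image_of_injective _ (fun j j' h => by
      simpa using einj (a₁ := Sum.inr j) (a₂ := Sum.inr j') h)]
    simp
  have hdisj : Disjoint A B := by
    rw [Finset.disjoint_left]
    intro x hx hx'
    obtain ⟨i, hi⟩ := hmemA.mp hx
    obtain ⟨j, hj⟩ := hmemB.mp hx'
    have := einj (a₁ := Sum.inl i) (a₂ := Sum.inr j) (show (↑(e (Sum.inl i)) : V) = ↑(e (Sum.inr j)) by rw [hi, hj])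
    simp at this
  have hadj : ∀ x ∈ A, ∀ y ∈ B, G.Adj x y := by
    intro x hx y hy
    obtain ⟨i, rfl⟩ := hmemA.mp hx
    obtain ⟨j, rfl⟩ := hmemB.mp hy
    have : (Kbip a b).Adj (Sum.inl i) (Sum.inr j) := by simp
    have h2 := e.map_rel_iff.mpr this
    exact G'.adj_sub h2
  refine ⟨(A, B), ?_, ?_⟩
  · simp only [mem_OC]; exact ⟨hcardA, hcardB, hdisj, hadj⟩
  · have hverts : G'.verts = ↑A ∪ ↑B := by
      apply Set.eq_of_subset_of_subset
      · intro x hx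
        rcases h : (e.symm ⟨x, hx⟩) with i | j
        · exact Or.inl (hmemA.mpr ⟨i, by rw [← h]; simp⟩)
        · exact Or.inr (hmemB.mpr ⟨j, by rw [← h]; simp⟩)
      · rintro x (hx | hx)
        · obtain ⟨i, rfl⟩ := hmemA.mp hx; exact (e (Sum.inl i)).2
        · obtain ⟨j, rfl⟩ := hmemB.mp hx; exact (e (Sum.inr j)).2
    have hAdj : ∀ x y, G'.Adj x y ↔ (bipSub G A B).Adj x y := by
      intro x y
      constructor
      · intro h
        have hx : x ∈ G'.verts := G'.edge_vert h
        have hy : y ∈ G'.verts := G'.edge_vert h.symm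
        have hcoe : G'.coe.Adj ⟨x, hx⟩ ⟨y, hy⟩ := h
        have hk : (Kbip a b).Adj (e.symm ⟨x, hx⟩) (e.symm ⟨y, hy⟩) := by
          rw [← e.map_rel_iff]
          simpa using hcoe
        have hex : (↑(e (e.symm ⟨x, hx⟩)) : V) = x := by simp
        have hey : (↑(e (e.symm ⟨y, hy⟩)) : V) = y := by simp
        rcases hu : (e.symm ⟨x, hx⟩) with i | j <;> rcases hw : (e.symm ⟨y, hy⟩) with i' | j'
        · rw [hu, hw] at hk; simp at hk
        · refine ⟨Or.inl ⟨?_, ?_⟩, G'.adj_sub h⟩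
          · exact hmemA.mpr ⟨i, by rw [← hu]; exact hex⟩
          · exact hmemB.mpr ⟨j', by rw [← hw]; exact hey⟩
        · refine ⟨Or.inr ⟨?_, ?_⟩, G'.adj_sub h⟩
          · exact hmemA.mpr ⟨i', by rw [← hw]; exact hey⟩
          · exact hmemB.mpr ⟨j, by rw [← hu]; exact hex⟩
        · rw [hu, hw] at hk; simp at hk
      · rintro ⟨⟨hxA, hyB⟩ | ⟨hyA, hxB⟩, -⟩
        · obtain ⟨i, rfl⟩ := hmemA.mp hxA
          obtain ⟨j, rfl⟩ := hmemB.mp hyB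
          exact e.map_rel_iff.mpr (by simp)
        · obtain ⟨i, rfl⟩ := hmemA.mp hyA
          obtain ⟨j, rfl⟩ := hmemB.mp hxB
          exact (e.map_rel_iff.mpr (by simp) : G'.Adj _ _).symm
    exact Subgraph.ext hverts (by funext x y; exact propext (hAdj x y))

lemma bipSub_inj {G : SimpleGraph V} {A B A' B' : Finset V}
    (hAne : A.Nonempty) (hd : Disjoint A B) (hd' : Disjoint A' B')
    (hadj : ∀ x ∈ A, ∀ y ∈ B, G.Adj x y) (hadj' : ∀ x ∈ A', ∀ y ∈ B', G.Adj x y)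
    (h : bipSub G A B = bipSub G A' B') :
    (A = A' ∧ B = B') ∨ (A = B' ∧ B = A') := by
  classical
  have hverts : (↑A ∪ ↑B : Set V) = ↑A' ∪ ↑B' := congrArg Subgraph.verts h
  have hvF : A ∪ B = A' ∪ B' := by
    apply Finset.coe_injective
    simpa using hverts
  have hAdj : ∀ x y, (bipSub G A B).Adj x y ↔ (bipSub G A' B').Adj x y := by
    intro x y; rw [h]
  obtain ⟨x, hx⟩ := hAne
  have hxv : x ∈ A' ∪ B' := by rw [← hvF]; exact Finset.mem_union_left _ hx
  have hxB : x ∉ B := Finset.disjoint_left.mp hd hx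
  rcases Finset.mem_union.mp hxv with hxA' | hxB'
  · left
    have hxB' : x ∉ B' := Finset.disjoint_left.mp hd' hxA'
    have hBB' : B = B' := by
      ext y
      constructor
      · intro hy
        have := (hAdj x y).mp ⟨Or.inl ⟨hx, hy⟩, hadj x hx y hy⟩
        rcases this.1 with ⟨-, h2⟩ | ⟨-, h2⟩
        · exact h2
        · exact absurd h2 hxB'
      · intro hy
        have := (hAdj x y).mpr ⟨Or.inl ⟨hxA', hy⟩, hadj' x hxA' y hy⟩
        rcases this.1 with ⟨-, h2⟩ | ⟨-, h2⟩
        · exact h2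
        · exact absurd h2 hxB
    refine ⟨?_, hBB'⟩
    calc A = (A ∪ B) \ B := (Finset.union_sdiff_cancel_right hd).symm
    _ = (A' ∪ B') \ B' := by rw [hvF, hBB']
    _ = A' := Finset.union_sdiff_cancel_right hd'
  · right
    have hxA' : x ∉ A' := Finset.disjoint_right.mp hd' hxB'
    have hBA' : B = A' := by
      ext y
      constructor
      · intro hy
        have := (hAdj x y).mp ⟨Or.inl ⟨hx, hy⟩, hadj x hx y hy⟩
        rcases this.1 with ⟨h1, -⟩ | ⟨h1, -⟩
        · exact absurd h1 hxA'
        · exact h1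
      · intro hy
        have := (hAdj y x).mpr ⟨Or.inl ⟨hy, hxB'⟩, hadj' y hy x hxB'⟩
        rcases this.1 with ⟨h1, h2⟩ | ⟨h1, h2⟩
        · exact absurd h2 hxB
        · exact h2
    refine ⟨?_, hBA'⟩
    have hdBB' : Disjoint B B' := hBA' ▸ hd'
    calc A = (A ∪ B) \ B := (Finset.union_sdiff_cancel_right hd).symm
    _ = (B ∪ B') \ B := by rw [hvF, hBA']
    _ = B' := Finset.union_sdiff_cancel_left hdBB'

lemma copyCount_eq_OC [Fintype V] (G : SimpleGraph V) {a b : ℕ} (ha : 1 ≤ a) (hb : 1 ≤ b) :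
    (OC G a b).card = (if a = b then 2 else 1) * copyCount' (Kbip a b) G := by
  classical
  set f : Finset V × Finset V → G.Subgraph := fun p => bipSub G p.1 p.2 with hf
  have himg : {G' : G.Subgraph | Nonempty (Kbip a b ≃g G'.coe)} = ↑((OC G a b).image f) := by
    ext G'
    simp only [Set.mem_setOf_eq, Finset.coe_image, Set.mem_image, Finset.mem_coe]
    constructor
    · rintro ⟨e⟩
      obtain ⟨p, hp, rfl⟩ := exists_OC_of_iso e
      exact ⟨p, hp, rfl⟩
    · rintro ⟨p, hp, rfl⟩
      rw [mem_OC] at hp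
      exact ⟨bipSubIso hp.1 hp.2.1 hp.2.2.1 hp.2.2.2⟩
  have hcc : copyCount' (Kbip a b) G = ((OC G a b).image f).card := by
    have h1 : copyCount' (Kbip a b) G
        = ({G' : G.Subgraph | Nonempty (Kbip a b ≃g G'.coe)}).ncard :=
      Nat.card_coe_set_eq _
    rw [h1, himg, Set.ncard_coe_finset]
  have hfib : ∀ s ∈ (OC G a b).image f,
      ((OC G a b).filter (fun q => f q = s)).card = (if a = b then 2 else 1) := by
    intro s hs
    obtain ⟨p, hp, rfl⟩ := Finset.mem_image.mp hs
    have hp' := mem_OC.mp hp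
    have hne1 : p.1.Nonempty := Finset.card_pos.mp (by omega)
    have hne2 : p.2.Nonempty := Finset.card_pos.mp (by omega)
    by_cases hab : a = b
    · rw [if_pos hab]
      have hswap : f (p.2, p.1) = f p := (bipSub_comm G p.1 p.2).symm
      have hmemswap : (p.2, p.1) ∈ OC G a b := by
        rw [mem_OC]
        exact ⟨by rw [hab]; exact hp'.2.1, by rw [← hab]; exact hp'.1, hp'.2.2.1.symm,
          fun x hx y hy => (hp'.2.2.2 y hy x hx).symm⟩
      have hpne : p ≠ (p.2, p.1) := by
        intro hcon
        have h12 : p.1 = p.2 := congrArg Prod.fst hcon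
        obtain ⟨x, hx⟩ := hne1
        exact Finset.disjoint_left.mp hp'.2.2.1 hx (h12 ▸ hx)
      have heq : (OC G a b).filter (fun q => f q = f p) = {p, (p.2, p.1)} := by
        ext q
        simp only [Finset.mem_filter, Finset.mem_insert, Finset.mem_singleton]
        constructor
        · rintro ⟨hq, hfq⟩
          have hq' := mem_OC.mp hq
          have hqne1 : q.1.Nonempty := Finset.card_pos.mp (by omega)
          rcases bipSub_inj hqne1 hq'.2.2.1 hp'.2.2.1 hq'.2.2.2 hp'.2.2.2 hfq with
            ⟨h1, h2⟩ | ⟨h1, h2⟩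
          · exact Or.inl (Prod.ext h1 h2)
          · exact Or.inr (Prod.ext h1 h2)
        · rintro (rfl | rfl)
          · exact ⟨hp, rfl⟩
          · exact ⟨hmemswap, hswap⟩
      rw [heq, Finset.card_insert_of_notMem (by simpa using hpne), Finset.card_singleton]
    · rw [if_neg hab]
      have heq : (OC G a b).filter (fun q => f q = f p) = {p} := by
        ext q
        simp only [Finset.mem_filter, Finset.mem_singleton]
        constructor
        · rintro ⟨hq, hfq⟩
          have hq' := mem_OC.mp hq
          have hqne1 : q.1.Nonempty := Finset.card_pos.mp (by omega)
          rcases bipSub_inj hqne1 hq'.2.2.1 hp'.2.2.1 hq'.2.2.2 hp'.2.2.2 hfq with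
            ⟨h1, h2⟩ | ⟨h1, h2⟩
          · exact Prod.ext h1 h2
          · exact absurd (by rw [← hq'.1, h1, hp'.2.1]) hab
        · rintro rfl
          exact ⟨hp, rfl⟩
      rw [heq, Finset.card_singleton]
  calc (OC G a b).card
      = ∑ s ∈ (OC G a b).image f, ((OC G a b).filter (fun q => f q = s)).card :=
        Finset.card_eq_sum_card_image f (OC G a b)
    _ = ∑ _s ∈ (OC G a b).image f, (if a = b then 2 else 1) :=
        Finset.sum_congr rfl hfib
    _ = ((OC G a b).image f).card * (if a = b then 2 else 1) := by
        rw [Finset.sum_const, smul_eq_mul]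
    _ = (if a = b then 2 else 1) * copyCount' (Kbip a b) G := by
        rw [hcc, mul_comm]

lemma OC_card_le [Fintype V] {G : SimpleGraph V} [DecidableRel G.Adj] {a b t : ℕ}
    (ha : 1 ≤ a) (hb : 1 ≤ b)
    (hdeg : ∀ v : V, (G.neighborFinset v).card ≤ t - 1) :
    a * b * (OC G a b).card ≤
      Fintype.card V * (t - 1) * (Nat.choose (t - 2) (a - 1) * Nat.choose (t - 2) (b - 1)) := by
  classical
  set T : Finset ((Finset V × Finset V) × (V × V)) :=
    ((OC G a b) ×ˢ Finset.univ).filter (fun q => q.2.1 ∈ q.1.1 ∧ q.2.2 ∈ q.1.2) with hT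
  -- first count : T.card = OC.card * (a*b)
  have hcount1 : T.card = (OC G a b).card * (a * b) := by
    rw [Finset.card_eq_sum_card_fiberwise (f := fun q => q.1) (t := OC G a b)
      (fun q hq => by
        change q ∈ T at hq
        simp only [hT, Finset.mem_filter, Finset.mem_product] at hq
        exact hq.1.1)]
    rw [Finset.sum_congr rfl (fun p hp => ?_), Finset.sum_const, smul_eq_mul]
    have hp' := mem_OC.mp hp
    have hfib : T.filter (fun q => q.1 = p) = {p} ×ˢ (p.1 ×ˢ p.2) := by
      ext q
      simp only [hT, Finset.mem_filter, Finset.mem_product, Finset.mem_univ,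
        Finset.mem_singleton, and_true, true_and]
      constructor
      · rintro ⟨⟨h1, h2, h3⟩, rfl⟩
        exact ⟨rfl, h2, h3⟩
      · rintro ⟨rfl, h2, h3⟩
        exact ⟨⟨hp, h2, h3⟩, rfl⟩
    rw [hfib, Finset.card_product, Finset.card_product, Finset.card_singleton,
      hp'.1, hp'.2.1, one_mul]
  -- second count
  have hfree : ∀ u v : V, G.Adj u v →
      (T.filter (fun q => q.2 = (u, v))).card ≤
        Nat.choose (t - 2) (a - 1) * Nat.choose (t - 2) (b - 1) := by
    intro u v huv
    have hinj : ∀ q ∈ T.filter (fun q => q.2 = (u, v)),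
        (q.1.1.erase u, q.1.2.erase v) ∈
          (((G.neighborFinset v).erase u).powersetCard (a - 1)) ×ˢ
            (((G.neighborFinset u).erase v).powersetCard (b - 1)) := by
      intro q hq
      simp only [hT, Finset.mem_filter, Finset.mem_product, Finset.mem_univ, and_true] at hq
      obtain ⟨⟨hqOC, hu, hv⟩, hq2⟩ := hq
      have hq' := mem_OC.mp hqOC
      have hu1 : u ∈ q.1.1 := by rw [hq2] at hu; exact hu
      have hv2 : v ∈ q.1.2 := by rw [hq2] at hv; exact hv
      rw [Finset.mem_product]
      constructor
      · rw [Finset.mem_powersetCard]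
        constructor
        · intro x hx
          obtain ⟨hxu, hxA⟩ := Finset.mem_erase.mp hx
          exact Finset.mem_erase.mpr ⟨hxu, by
            rw [SimpleGraph.mem_neighborFinset]
            exact (hq'.2.2.2 x hxA v hv2).symm⟩
        · rw [Finset.card_erase_of_mem hu1, hq'.1]
      · rw [Finset.mem_powersetCard]
        constructor
        · intro y hy
          obtain ⟨hyv, hyB⟩ := Finset.mem_erase.mp hy
          exact Finset.mem_erase.mpr ⟨hyv, by
            rw [SimpleGraph.mem_neighborFinset]
            exact hq'.2.2.2 u hu1 y hyB⟩
        · rw [Finset.card_erase_of_mem hv2, hq'.2.1]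
    have hinjOn : Set.InjOn (fun q : (Finset V × Finset V) × (V × V) =>
        (q.1.1.erase u, q.1.2.erase v)) (T.filter (fun q => q.2 = (u, v))) := by
      intro q hq q' hq' heq
      simp only [Finset.coe_filter, Set.mem_setOf_eq, hT, Finset.mem_filter,
        Finset.mem_product, Finset.mem_univ, and_true] at hq hq'
      obtain ⟨⟨-, hu1, hv1⟩, hq2⟩ := hq
      obtain ⟨⟨-, hu1', hv1'⟩, hq2'⟩ := hq'
      have e1 : q.1.1.erase u = q'.1.1.erase u := congrArg Prod.fst heq
      have e2 : q.1.2.erase v = q'.1.2.erase v := congrArg Prod.snd heq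
      have hu1 : u ∈ q.1.1 := by rw [hq2] at hu1; exact hu1
      have hv1 : v ∈ q.1.2 := by rw [hq2] at hv1; exact hv1
      have hu1' : u ∈ q'.1.1 := by rw [hq2'] at hu1'; exact hu1'
      have hv1' : v ∈ q'.1.2 := by rw [hq2'] at hv1'; exact hv1'
      have : q.1 = q'.1 := by
        apply Prod.ext
        · rw [← Finset.insert_erase hu1, ← Finset.insert_erase hu1', e1]
        · rw [← Finset.insert_erase hv1, ← Finset.insert_erase hv1', e2]
      apply Prod.ext this (hq2.trans hq2'.symm)
    calc (T.filter (fun q => q.2 = (u, v))).card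
        ≤ ((((G.neighborFinset v).erase u).powersetCard (a - 1)) ×ˢ
            (((G.neighborFinset u).erase v).powersetCard (b - 1))).card :=
          Finset.card_le_card_of_injOn _ hinj hinjOn
      _ = Nat.choose (((G.neighborFinset v).erase u).card) (a - 1) *
            Nat.choose (((G.neighborFinset u).erase v).card) (b - 1) := by
          rw [Finset.card_product, Finset.card_powersetCard, Finset.card_powersetCard]
      _ ≤ Nat.choose (t - 2) (a - 1) * Nat.choose (t - 2) (b - 1) := by
          apply Nat.mul_le_mul
          · apply Nat.choose_le_choose
            rw [Finset.card_erase_of_mem (by rw [SimpleGraph.mem_neighborFinset]; exact huv.symm)]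
            have := hdeg v
            omega
          · apply Nat.choose_le_choose
            rw [Finset.card_erase_of_mem (by rw [SimpleGraph.mem_neighborFinset]; exact huv)]
            have := hdeg u
            omega
  have hempty : ∀ u v : V, ¬ G.Adj u v → (T.filter (fun q => q.2 = (u, v))).card = 0 := by
    intro u v huv
    rw [Finset.card_eq_zero]
    ext q
    simp only [hT, Finset.mem_filter, Finset.mem_product, Finset.mem_univ, and_true,
      Finset.notMem_empty, iff_false]
    rintro ⟨⟨hqOC, hu, hv⟩, hq2⟩
    have hq' := mem_OC.mp hqOC
    rw [hq2] at hu hv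
    exact huv (hq'.2.2.2 u hu v hv)
  -- edge count
  have hedges : ((Finset.univ : Finset (V × V)).filter (fun e => G.Adj e.1 e.2)).card ≤
      Fintype.card V * (t - 1) := by
    rw [Finset.card_eq_sum_card_fiberwise (f := fun e => e.1)
      (t := (Finset.univ : Finset V)) (fun e _ => Finset.mem_univ _)]
    calc ∑ v ∈ Finset.univ, ((Finset.univ.filter (fun e : V × V => G.Adj e.1 e.2)).filter
          (fun e => e.1 = v)).card
        ≤ ∑ _v ∈ (Finset.univ : Finset V), (t - 1) := by
          apply Finset.sum_le_sum
          intro v _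
          have hsub : (Finset.univ.filter (fun e : V × V => G.Adj e.1 e.2)).filter
              (fun e => e.1 = v) ⊆ {v} ×ˢ G.neighborFinset v := by
            intro e he
            simp only [Finset.mem_filter, Finset.mem_univ, true_and] at he
            rw [Finset.mem_product, Finset.mem_singleton, SimpleGraph.mem_neighborFinset]
            exact ⟨he.2, by rw [← he.2]; exact he.1⟩
          calc _ ≤ ({v} ×ˢ G.neighborFinset v).card := Finset.card_le_card hsub
            _ = (G.neighborFinset v).card := by
                rw [Finset.card_product, Finset.card_singleton, one_mul]
            _ ≤ t - 1 := hdeg v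
      _ = Fintype.card V * (t - 1) := by
          rw [Finset.sum_const, smul_eq_mul, Finset.card_univ]
  have hcount2 : T.card ≤ Fintype.card V * (t - 1) *
      (Nat.choose (t - 2) (a - 1) * Nat.choose (t - 2) (b - 1)) := by
    rw [Finset.card_eq_sum_card_fiberwise (f := fun q => q.2)
      (t := (Finset.univ : Finset (V × V))) (fun q _ => Finset.mem_univ _)]
    calc ∑ e ∈ (Finset.univ : Finset (V × V)), (T.filter (fun q => q.2 = e)).card
        ≤ ∑ e ∈ (Finset.univ : Finset (V × V)),
            (if G.Adj e.1 e.2 then Nat.choose (t - 2) (a - 1) * Nat.choose (t - 2) (b - 1)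
             else 0) := by
          apply Finset.sum_le_sum
          intro e _
          by_cases he : G.Adj e.1 e.2
          · rw [if_pos he]
            exact hfree e.1 e.2 he
          · rw [if_neg he, hempty e.1 e.2 he]
      _ = ∑ e ∈ (Finset.univ : Finset (V × V)).filter (fun e => G.Adj e.1 e.2),
            (Nat.choose (t - 2) (a - 1) * Nat.choose (t - 2) (b - 1)) :=
          (Finset.sum_filter _ _).symm
      _ = ((Finset.univ : Finset (V × V)).filter (fun e => G.Adj e.1 e.2)).card *
            (Nat.choose (t - 2) (a - 1) * Nat.choose (t - 2) (b - 1)) := by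
          rw [Finset.sum_const, smul_eq_mul]
      _ ≤ Fintype.card V * (t - 1) *
            (Nat.choose (t - 2) (a - 1) * Nat.choose (t - 2) (b - 1)) := by
          exact Nat.mul_le_mul_right _ hedges
  calc a * b * (OC G a b).card = T.card := by rw [hcount1]; ring
    _ ≤ _ := hcount2

lemma degree_le_of_free {W : Type*} [Fintype W] {t : ℕ} {G : SimpleGraph W}
    [DecidableRel G.Adj] (hfree : ¬ ContainsCopy (Kbip 1 t) G) (v : W) :
    (G.neighborFinset v).card ≤ t - 1 := by
  by_contra hcon
  have ht' : t ≤ (G.neighborFinset v).card := by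
    rcases Nat.eq_zero_or_pos t with rfl | ht
    · omega
    · omega
  let e := (G.neighborFinset v).equivFin
  let g : Fin t → W := fun j => (e.symm (Fin.castLE ht' j) : W)
  have hgmem : ∀ j, g j ∈ G.neighborFinset v := fun j => (e.symm (Fin.castLE ht' j)).2
  have hgadj : ∀ j, G.Adj v (g j) := fun j => (SimpleGraph.mem_neighborFinset _ _ _).mp (hgmem j)
  have hginj : Function.Injective g := by
    intro j j' h
    have := e.symm.injective (Subtype.val_injective h)
    exact Fin.castLE_injective ht' this
  apply hfree
  refine ⟨⟨Sum.elim (fun _ => v) g, ?_⟩, ?_⟩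
  · rintro (i | j) (i' | j') hadj <;> simp only [completeBipartiteGraph_adj] at hadj <;>
      simp at hadj ⊢
    · exact hgadj j'
    · exact (hgadj j).symm
  · rintro (i | j) (i' | j') h
    · simp [Subsingleton.elim i i']
    · have h' : v = g j' := h
      exact absurd (h' ▸ hgadj j') (G.irrefl)
    · have h' : g j = v := h
      exact absurd (h'.symm ▸ hgadj j) (G.irrefl)
    · have h' : g j = g j' := h
      rw [hginj h']

lemma free_disjCopies {k m t : ℕ} (hmt : m < t) :
    ¬ ContainsCopy (Kbip 1 t) (disjCopies k (Kbip m m)) := by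
  rintro ⟨f, hinj⟩
  set v := f (Sum.inl 0) with hv
  have hadj : ∀ j : Fin t, (disjCopies k (Kbip m m)).Adj v (f (Sum.inr j)) := by
    intro j
    apply f.map_rel
    simp
  have key : ∀ j : Fin t, (f (Sum.inr j)).1 = v.1 ∧
      ((v.2.isLeft ∧ (f (Sum.inr j)).2.isRight) ∨ (v.2.isRight ∧ (f (Sum.inr j)).2.isLeft)) := by
    intro j
    have h := hadj j
    rw [show (disjCopies k (Kbip m m)).Adj v (f (Sum.inr j)) ↔ v ≠ f (Sum.inr j) ∧
        ((v.1 = (f (Sum.inr j)).1 ∧ (Kbip m m).Adj v.2 (f (Sum.inr j)).2) ∨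
         ((f (Sum.inr j)).1 = v.1 ∧ (Kbip m m).Adj (f (Sum.inr j)).2 v.2)) from Iff.rfl] at h
    obtain ⟨-, h⟩ := h
    rcases h with ⟨h1, h2⟩ | ⟨h1, h2⟩
    · simp only [completeBipartiteGraph_adj] at h2
      rcases h2 with ⟨hl, hr⟩ | ⟨hr, hl⟩
      · exact ⟨h1.symm, Or.inl ⟨hl, hr⟩⟩
      · exact ⟨h1.symm, Or.inr ⟨hr, hl⟩⟩
    · simp only [completeBipartiteGraph_adj] at h2
      rcases h2 with ⟨hl, hr⟩ | ⟨hr, hl⟩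
      · exact ⟨h1, Or.inr ⟨hr, hl⟩⟩
      · exact ⟨h1, Or.inl ⟨hl, hr⟩⟩
  let F : Fin t → Fin m := fun j => Sum.elim id id (f (Sum.inr j)).2
  have hFinj : Function.Injective F := by
    intro j j' hFeq
    have k1 := key j
    have k2 := key j'
    have heq : f (Sum.inr j) = f (Sum.inr j') := by
      apply Prod.ext
      · rw [k1.1, k2.1]
      · rcases k1.2 with ⟨hvl, h1⟩ | ⟨hvr, h1⟩ <;> rcases k2.2 with ⟨hvl', h2⟩ | ⟨hvr', h2⟩
        · rcases Sum.isRight_iff.mp h1 with ⟨q, hq⟩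
          rcases Sum.isRight_iff.mp h2 with ⟨q', hq'⟩
          simp only [F, hq, hq', Sum.elim_inr, id] at hFeq
          rw [hq, hq', hFeq]
        · obtain ⟨x, hx⟩ := Sum.isLeft_iff.mp hvl
          rw [hx] at hvr'
          simp at hvr'
        · obtain ⟨x, hx⟩ := Sum.isLeft_iff.mp hvl'
          rw [hx] at hvr
          simp at hvr
        · rcases Sum.isLeft_iff.mp h1 with ⟨q, hq⟩
          rcases Sum.isLeft_iff.mp h2 with ⟨q', hq'⟩
          simp only [F, hq, hq', Sum.elim_inl, id] at hFeq
          rw [hq, hq', hFeq]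
    have := hinj heq
    simpa using this
  have := Fintype.card_le_of_injective F hFinj
  simp only [Fintype.card_fin] at this
  omega

lemma le_OC_disjCopies {k m a b : ℕ} (ha : 1 ≤ a) (hb : 1 ≤ b) :
    2 * k * (Nat.choose m a * Nat.choose m b) ≤
      (OC (disjCopies k (Kbip m m)) a b).card := by
  classical
  set Gs := disjCopies k (Kbip m m) with hGs
  set emb : Bool → Fin k → Fin m → Fin k × (Fin m ⊕ Fin m) :=
    fun σ i p => (i, if σ then Sum.inl p else Sum.inr p) with hemb
  have hembinj : ∀ σ i, Function.Injective (emb σ i) := by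
    intro σ i p p' h
    cases σ <;> simpa [hemb] using h
  set src : Finset ((Bool × Fin k) × Finset (Fin m) × Finset (Fin m)) :=
    Finset.univ ×ˢ ((Finset.univ.powersetCard a) ×ˢ (Finset.univ.powersetCard b)) with hsrc
  set g : (Bool × Fin k) × Finset (Fin m) × Finset (Fin m) → Finset _ × Finset _ :=
    fun q => (q.2.1.image (emb q.1.1 q.1.2), q.2.2.image (emb (!q.1.1) q.1.2)) with hg
  have hmem : ∀ q ∈ src, g q ∈ OC Gs a b := by
    rintro ⟨⟨σ, i⟩, S, T⟩ hq
    simp only [hsrc, Finset.mem_product, Finset.mem_univ, true_and,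
      Finset.mem_powersetCard] at hq
    rw [mem_OC]
    refine ⟨?_, ?_, ?_, ?_⟩
    · rw [Finset.card_image_of_injective _ (hembinj σ i), hq.1.2]
    · rw [Finset.card_image_of_injective _ (hembinj (!σ) i), hq.2.2]
    · rw [Finset.disjoint_left]
      intro x hx hx'
      simp only [hg, Finset.mem_image] at hx hx'
      obtain ⟨p, -, rfl⟩ := hx
      obtain ⟨p', -, hpp⟩ := hx'
      cases σ <;> simp [hemb] at hpp
    · intro x hx y hy
      simp only [hg, Finset.mem_image] at hx hy
      obtain ⟨p, -, rfl⟩ := hx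
      obtain ⟨p', -, rfl⟩ := hy
      rw [hGs]
      refine ⟨?_, Or.inl ⟨rfl, ?_⟩⟩
      · cases σ <;> simp [hemb]
      · cases σ <;> simp [hemb]
  have hinjOn : Set.InjOn g src := by
    rintro ⟨⟨σ, i⟩, S, T⟩ hq ⟨⟨σ', i'⟩, S', T'⟩ hq' heq
    simp only [hsrc, Finset.mem_coe, Finset.mem_product, Finset.mem_univ, true_and,
      Finset.mem_powersetCard] at hq hq'
    have h1 : S.image (emb σ i) = S'.image (emb σ' i') := congrArg Prod.fst heq
    have h2 : T.image (emb (!σ) i) = T'.image (emb (!σ') i') := congrArg Prod.snd heq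
    have hSne : S.Nonempty := by
      apply Finset.card_pos.mp
      have := hq.1
      omega
    obtain ⟨p, hp⟩ := hSne
    have hmem1 : emb σ i p ∈ S'.image (emb σ' i') := by
      rw [← h1]; exact Finset.mem_image_of_mem _ hp
    obtain ⟨p', -, hpe⟩ := Finset.mem_image.mp hmem1
    have hii : i' = i := congrArg Prod.fst hpe
    have hσσ : σ' = σ := by
      have h := congrArg Prod.snd hpe
      cases σ <;> cases σ' <;> simp [hemb] at h ⊢
    rw [hσσ, hii] at h1 h2
    have hS : S = S' := Finset.image_injective (hembinj σ i) h1
    have hT : T = T' := Finset.image_injective (hembinj (!σ) i) h2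
    rw [hS, hT, hσσ, hii]
  calc 2 * k * (Nat.choose m a * Nat.choose m b) = src.card := by
        simp [hsrc, Finset.card_powersetCard]
    _ ≤ (OC Gs a b).card := Finset.card_le_card_of_injOn g hmem hinjOn

noncomputable def subgraphIsoMap {α β : Type*} {G : SimpleGraph α} {G' : SimpleGraph β}
    (φ : G ≃g G') (s : G.Subgraph) : s.coe ≃g (s.map φ.toHom).coe := by
  refine ⟨Equiv.Set.image (⇑φ) s.verts φ.injective, ?_⟩
  rintro ⟨x, hx⟩ ⟨y, hy⟩
  simp only [Subgraph.coe_adj, Subgraph.map_adj, Equiv.Set.image_apply]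
  constructor
  · rintro ⟨u, v, huv, hu, hv⟩
    have hu' : φ u = φ x := hu
    have hv' : φ v = φ y := hv
    rw [φ.injective.eq_iff] at hu' hv'
    rwa [← hu', ← hv']
  · intro h
    exact ⟨x, y, h, rfl, rfl⟩

lemma copyCount_iso {α β γ : Type*} (H : SimpleGraph γ) {G : SimpleGraph α}
    {G' : SimpleGraph β} (φ : G ≃g G') : copyCount' H G = copyCount' H G' := by
  apply Nat.card_congr
  refine ⟨fun s => ⟨s.1.map φ.toHom, s.2.map (fun e => e.trans (subgraphIsoMap φ s.1))⟩,
    fun s => ⟨s.1.map φ.symm.toHom, s.2.map (fun e => e.trans (subgraphIsoMap φ.symm s.1))⟩,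
    ?_, ?_⟩
  · rintro ⟨s, hs⟩
    apply Subtype.ext
    simp only
    rw [← Subgraph.map_comp]
    have : (φ.symm.toHom.comp φ.toHom) = SimpleGraph.Hom.id := by
      ext v
      exact φ.symm_apply_apply v
    rw [this, Subgraph.map_id]
  · rintro ⟨s, hs⟩
    apply Subtype.ext
    simp only
    rw [← Subgraph.map_comp]
    have : (φ.toHom.comp φ.symm.toHom) = SimpleGraph.Hom.id := by
      ext v
      exact φ.apply_symm_apply v
    rw [this, Subgraph.map_id]

lemma containsCopy_of_iso {α β γ : Type*} {F : SimpleGraph γ} {G : SimpleGraph α}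
    {G' : SimpleGraph β} (φ : G ≃g G') (h : ContainsCopy F G) : ContainsCopy F G' := by
  obtain ⟨f, hf⟩ := h
  exact ⟨φ.toHom.comp f, φ.injective.comp hf⟩

lemma arith_key (a b m k : ℕ) (ha : 1 ≤ a) (hb : 1 ≤ b) (hm : 1 ≤ m) :
    (2 * m * k) * m * (Nat.choose (m - 1) (a - 1) * Nat.choose (m - 1) (b - 1)) =
      a * b * (2 * k * (Nat.choose m a * Nat.choose m b)) := by
  obtain ⟨a', rfl⟩ : ∃ a', a = a' + 1 := ⟨a - 1, by omega⟩
  obtain ⟨b', rfl⟩ : ∃ b', b = b' + 1 := ⟨b - 1, by omega⟩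
  obtain ⟨m', rfl⟩ : ∃ m', m = m' + 1 := ⟨m - 1, by omega⟩
  simp only [Nat.add_sub_cancel]
  have h1 := Nat.add_one_mul_choose_eq m' a'
  have h2 := Nat.add_one_mul_choose_eq m' b'
  calc (2 * (m' + 1) * k) * (m' + 1) * (Nat.choose m' a' * Nat.choose m' b')
      = 2 * k * (((m' + 1) * Nat.choose m' a') * ((m' + 1) * Nat.choose m' b')) := by ring
    _ = 2 * k * ((Nat.choose (m' + 1) (a' + 1) * (a' + 1)) *
          (Nat.choose (m' + 1) (b' + 1) * (b' + 1))) := by rw [h1, h2]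
    _ = (a' + 1) * (b' + 1) * (2 * k * (Nat.choose (m' + 1) (a' + 1) *
          Nat.choose (m' + 1) (b' + 1))) := by ring


end AuxProofs

/-- if `1 ≤ a ≤ b < t` and `(2t-2) ∣ n`, then
`ex(n, K_{a,b}, K_{1,t}) = N(K_{a,b}, (n/(2t-2))·K_{t-1,t-1})`. -/
theorem stmt12 (a b t n : ℕ) (ha : 1 ≤ a) (hab : a ≤ b) (hbt : b < t) (hn : 0 < n)
    (hdvd : (2 * t - 2) ∣ n) :
    exGen n (Kbip a b) (Kbip 1 t) =
      copyCount' (Kbip a b) (disjCopies (n / (2 * t - 2)) (Kbip (t - 1) (t - 1))) := by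
  have hb1 : 1 ≤ b := le_trans ha hab
  have ht2 : 2 ≤ t := by omega
  have hm1 : 1 ≤ t - 1 := by omega
  have hn2 : n = 2 * (t - 1) * (n / (2 * t - 2)) := by
    have h1 : n / (2 * t - 2) * (2 * t - 2) = n := Nat.div_mul_cancel hdvd
    have h2 : 2 * t - 2 = 2 * (t - 1) := by omega
    calc n = n / (2 * t - 2) * (2 * t - 2) := h1.symm
      _ = 2 * (t - 1) * (n / (2 * t - 2)) := by rw [h2]; ring
  set k : ℕ := n / (2 * t - 2) with hk
  set Gstar : SimpleGraph (Fin k × (Fin (t - 1) ⊕ Fin (t - 1))) :=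
    disjCopies k (Kbip (t - 1) (t - 1)) with hGstar
  have hcard : Fintype.card (Fin k × (Fin (t - 1) ⊕ Fin (t - 1))) = n := by
    simp only [Fintype.card_prod, Fintype.card_sum, Fintype.card_fin]
    rw [hn2]
    ring
  let e : Fin n ≃ (Fin k × (Fin (t - 1) ⊕ Fin (t - 1))) :=
    (Fintype.equivFinOfCardEq hcard).symm
  set G0 : SimpleGraph (Fin n) := Gstar.comap e.toEmbedding with hG0
  let φ : G0 ≃g Gstar := SimpleGraph.Iso.comap e Gstar
  have hfree0 : ¬ ContainsCopy (Kbip 1 t) G0 := fun h =>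
    free_disjCopies (show t - 1 < t by omega) (containsCopy_of_iso φ h)
  have hcc0 : copyCount' (Kbip a b) G0 = copyCount' (Kbip a b) Gstar := copyCount_iso _ φ
  set S : Set ℕ := {m | ∃ G : SimpleGraph (Fin n),
    ¬ ContainsCopy (Kbip 1 t) G ∧ m = copyCount' (Kbip a b) G} with hS
  have hmemS : copyCount' (Kbip a b) Gstar ∈ S := ⟨G0, hfree0, hcc0.symm⟩
  have hub : ∀ x ∈ S, x ≤ copyCount' (Kbip a b) Gstar := by
    rintro x ⟨G, hGfree, rfl⟩
    haveI : DecidableRel G.Adj := fun _ _ => Classical.dec _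
    have hdeg : ∀ v, (G.neighborFinset v).card ≤ t - 1 :=
      degree_le_of_free hGfree
    have h1 : a * b * (OC G a b).card ≤
        n * (t - 1) * (Nat.choose (t - 2) (a - 1) * Nat.choose (t - 2) (b - 1)) := by
      have := OC_card_le (G := G) (t := t) ha hb1 hdeg
      simpa [Fintype.card_fin] using this
    have harith : n * (t - 1) * (Nat.choose (t - 2) (a - 1) * Nat.choose (t - 2) (b - 1)) =
        a * b * (2 * k * (Nat.choose (t - 1) a * Nat.choose (t - 1) b)) := by
      have hmm : t - 2 = (t - 1) - 1 := by omega
      rw [hmm]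
      calc n * (t - 1) * (Nat.choose ((t-1)-1) (a - 1) * Nat.choose ((t-1)-1) (b - 1))
          = (2 * (t-1) * k) * (t - 1) *
              (Nat.choose ((t-1)-1) (a - 1) * Nat.choose ((t-1)-1) (b - 1)) := by
            rw [← hn2]
        _ = a * b * (2 * k * (Nat.choose (t-1) a * Nat.choose (t-1) b)) :=
            arith_key a b (t - 1) k ha hb1 hm1
    have h2 : a * b * (2 * k * (Nat.choose (t - 1) a * Nat.choose (t - 1) b)) ≤
        a * b * (OC Gstar a b).card :=
      Nat.mul_le_mul_left _ (le_OC_disjCopies ha hb1)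
    have h3 : (OC G a b).card ≤ (OC Gstar a b).card := by
      have hab0 : 0 < a * b := by positivity
      apply Nat.le_of_mul_le_mul_left _ hab0
      calc a * b * (OC G a b).card ≤ _ := h1
        _ = _ := harith
        _ ≤ a * b * (OC Gstar a b).card := h2
    have e1 := copyCount_eq_OC G ha hb1
    have e2 := copyCount_eq_OC Gstar ha hb1
    have hc : 1 ≤ (if a = b then 2 else 1) := by split <;> omega
    apply Nat.le_of_mul_le_mul_left _ (show 0 < (if a = b then 2 else 1) by omega)
    rw [← e1, ← e2]
    exact h3
  have hbdd : BddAbove S := ⟨copyCount' (Kbip a b) Gstar, fun x hx => hub x hx⟩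
  rw [exGen]
  apply le_antisymm
  · exact csSup_le ⟨copyCount' (Kbip a b) Gstar, hmemS⟩ hub
  · exact le_csSup hbdd hmemS
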